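/- If (S,π) is a ⊕-semigroup, then S equipped with the operators induced by π satisfies axioms (A1)–(A4), i.e., is a ⊕-algebra. Similarly, if (S,π) is a ◦-monoid, then S equipped with the induced operators together with 1 = π(ε) satisfies axioms (A1)–(A5), i.e., is a ◦-algebra. -/

import Mathlib

/-- A countable word over the alphabet `A`: a countable linearly ordered domain
together with a labelling of its positions by letters of `A`.
Words are compared up to isomorphism via `CWord.Iso`. -/
structure CWord (A : Type) : Type 1 where
  carrier : Type
  ord : LinearOrder carrier
  cnt : Countable carrier
  label : carrier → A

attribute [instance] CWord.ord CWord.cnt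

namespace CWord

variable {A : Type}

/-- Isomorphism of words: an order-preserving bijection of the domains
commuting with the labellings. -/
def Iso (u v : CWord A) : Prop :=
  ∃ e : u.carrier ≃o v.carrier, ∀ x, v.label (e x) = u.label x

/-- The word with domain `ι` and labelling `f`. -/
def ofFun {ι : Type} [LinearOrder ι] [Countable ι] (f : ι → A) : CWord A :=
  ⟨ι, inferInstance, inferInstance, f⟩

/-- The one-letter word. -/
def single (a : A) : CWord A := ofFun (fun _ : Fin 1 => a)

/-- The empty word `ε`. -/
def epsilon : CWord A := ofFun (fun x : Fin 0 => (x.elim0 : A))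

/-- The generalized product `∏_{i ∈ ι} u i`: the word whose domain is the
lexicographic sum of the domains of the `u i`, with the inherited labels. -/
def prod {ι : Type} [LinearOrder ι] [Countable ι] (u : ι → CWord A) : CWord A :=
  ⟨Lex ((i : ι) × (u i).carrier), inferInstance,
    inferInstanceAs (Countable ((i : ι) × (u i).carrier)),
    fun x => (u (ofLex x).1).label (ofLex x).2⟩

/-- Concatenation of two words. -/
def concat (u v : CWord A) : CWord A := prod (fun b : Bool => cond b v u)

/-- The ω-power of a word. -/
def omegaPow (u : CWord A) : CWord A := prod (fun _ : ℕ => u)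

instance : Countable ℕᵒᵈ := inferInstanceAs (Countable ℕ)

/-- The ω*-power of a word. -/
def omegaStarPow (u : CWord A) : CWord A := prod (fun _ : ℕᵒᵈ => u)

/-- The `(n+1)`-st power of a word. -/
def nPowSucc (u : CWord A) (n : ℕ) : CWord A := prod (fun _ : Fin (n + 1) => u)

/-- `w` is an η-shuffle of the set of letters `P`: its domain has order
type η and every letter of `P` (and no other letter) occurs on a dense
set of positions. -/
def IsEtaWord {S : Type} (P : Set S) (w : CWord S) : Prop :=
  Nonempty w.carrier ∧ DenselyOrdered w.carrier ∧ NoMinOrder w.carrier ∧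
    NoMaxOrder w.carrier ∧ (∀ x, w.label x ∈ P) ∧
    ∀ a ∈ P, ∀ x y : w.carrier, x < y → ∃ z, x < z ∧ z < y ∧ w.label z = a

/-- `π` is a generalized product on the nonempty countable words over `S`,
i.e. `(S, π)` is a ⊕-semigroup: `π` is isomorphism-invariant, maps a
one-letter word to its letter and satisfies generalized associativity.
(`π` is modelled as a total function; only its values on nonempty words
are relevant.) -/
def IsPlusProd {S : Type} (π : CWord S → S) : Prop :=
  (∀ u v : CWord S, Nonempty u.carrier → Iso u v → π u = π v) ∧
  (∀ a : S, π (single a) = a) ∧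
  ∀ (ι : Type) [LinearOrder ι] [Countable ι] [Nonempty ι] (u : ι → CWord S),
    (∀ i, Nonempty (u i).carrier) → π (ofFun fun i => π (u i)) = π (prod u)

/-- `π` is a generalized product on all countable words over `M`,
i.e. `(M, π)` is a ◦-monoid. -/
def IsOProd {M : Type} (π : CWord M → M) : Prop :=
  (∀ u v : CWord M, Iso u v → π u = π v) ∧
  (∀ a : M, π (single a) = a) ∧
  ∀ (ι : Type) [LinearOrder ι] [Countable ι] (u : ι → CWord M),
    π (ofFun fun i => π (u i)) = π (prod u)

end CWord
/-- `sPow mul a n = a^(n+1)`: iterated product of `a` with itself. -/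
def sPow {S : Type} (mul : S → S → S) (a : S) : ℕ → S
  | 0 => a
  | n + 1 => mul a (sPow mul a n)

/-- Axioms (A1)–(A4) of a ⊕-algebra `(S, ·, τ, τ*, κ)`. -/
def PlusAlgAxioms {S : Type} (mul : S → S → S) (tau taustar : S → S)
    (kappa : Set S → S) : Prop :=
  -- (A1) associativity
  (∀ a b c : S, mul (mul a b) c = mul a (mul b c)) ∧
  -- (A2) τ is compatible to the right
  (∀ a b : S, tau (mul a b) = mul a (tau (mul b a))) ∧
  (∀ (a : S) (n : ℕ), tau (sPow mul a n) = tau a) ∧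
  -- (A3) τ* is compatible to the left
  (∀ a b : S, taustar (mul b a) = mul (taustar (mul a b)) a) ∧
  (∀ (a : S) (n : ℕ), taustar (sPow mul a n) = taustar a) ∧
  -- (A4) κ is compatible with shuffles
  ∀ P : Set S, P.Nonempty → ∀ c ∈ P, ∀ P' ⊆ P, ∀ P'' : Set S, P''.Nonempty →
    P'' ⊆ {x | x = kappa P ∨ (∃ a ∈ P, x = mul a (kappa P)) ∨
                (∃ b ∈ P, x = mul (kappa P) b) ∨
                (∃ a ∈ P, ∃ b ∈ P, x = mul (mul a (kappa P)) b)} →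
      kappa P = mul (kappa P) (kappa P) ∧
      kappa P = mul (kappa P) (mul c (kappa P)) ∧
      kappa P = tau (kappa P) ∧
      kappa P = tau (mul (kappa P) c) ∧
      kappa P = taustar (kappa P) ∧
      kappa P = taustar (mul c (kappa P)) ∧
      kappa P = kappa (P' ∪ P'')

/-- Axioms (A1)–(A5) of a ◦-algebra `(S, 1, ·, τ, τ*, κ)`. -/
def OAlgAxioms {S : Type} (one : S) (mul : S → S → S) (tau taustar : S → S)
    (kappa : Set S → S) : Prop :=
  PlusAlgAxioms mul tau taustar kappa ∧
  -- (A5)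
  (∀ x : S, mul x one = x) ∧ (∀ x : S, mul one x = x) ∧
  tau one = one ∧ taustar one = one ∧ kappa {one} = one ∧
  ∀ P : Set S, P.Nonempty → kappa (P ∪ {one}) = kappa P

/-- The operators `·, τ, τ*, κ` are the ones induced by the generalized
product `π`: `a · b = π(ab)`, `a^τ = π(a^ω)`, `a^{τ*} = π(a^{ω*})` and
`P^κ = π(P^η)` for every nonempty `P ⊆ S`. -/
def InducedByProd {S : Type} (π : CWord S → S) (mul : S → S → S)
    (tau taustar : S → S) (kappa : Set S → S) : Prop :=
  (∀ a b : S, mul a b = π (CWord.ofFun (fun x : Bool => cond x b a))) ∧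
  (∀ a : S, tau a = π (CWord.ofFun (fun _ : ℕ => a))) ∧
  (∀ a : S, taustar a = π (CWord.ofFun (fun _ : ℕᵒᵈ => a))) ∧
  (∀ P : Set S, P.Nonempty → ∃ w : CWord S, CWord.IsEtaWord P w ∧ kappa P = π w)

/-! ### Auxiliary toolkit -/

namespace CWordAux

open CWord OrderDual

instance lexSigmaCountable {ι : Type} [Countable ι] {K : ι → Type} [∀ i, Countable (K i)] :
    Countable (Lex ((i : ι) × K i)) :=
  inferInstanceAs (Countable ((i : ι) × K i))

/-- `Σₗ i, Fin 1 ≃o ι`. -/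
noncomputable def sigmaFin1Iso (ι : Type) [LinearOrder ι] : (Σₗ _ : ι, Fin 1) ≃o ι := by
  refine StrictMono.orderIsoOfSurjective (fun p => (ofLex p).1) ?_ ?_
  · intro p q h
    rcases h with @⟨i, j, z, v, h'⟩ | @⟨i, z, v, h'⟩
    · exact h'
    · exact absurd (Fin.lt_def.mp h') (by have := z.2; have := v.2; omega)
  · exact fun i => ⟨toLex ⟨i, 0⟩, rfl⟩

/-- `Σₗ _ : Fin 1, C ≃o C`. -/
noncomputable def fin1SigmaIso (C : Type) [LinearOrder C] :
    (Σₗ _ : Fin 1, C) ≃o C := by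
  refine StrictMono.orderIsoOfSurjective (fun p => (ofLex p).2) ?_ ?_
  · intro p q h
    rcases h with @⟨i, j, z, v, h'⟩ | @⟨i, z, v, h'⟩
    · exact absurd (Fin.lt_def.mp h') (by have := i.2; have := j.2; omega)
    · exact h'
  · intro z; exact ⟨toLex ⟨0, z⟩, rfl⟩

/-- `Σₗ _ : ι, Fin 0` is isomorphic to `Fin 0`. -/
noncomputable def sigmaEmptyIso (ι : Type) [LinearOrder ι] : (Σₗ _ : ι, Fin 0) ≃o Fin 0 := by
  refine StrictMono.orderIsoOfSurjective (fun p => (ofLex p).2) ?_ ?_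
  · rintro ⟨i, x⟩; exact x.elim0
  · intro z; exact z.elim0

/-- Flattening of a nested lexicographic sum. -/
noncomputable def flattenIso {ι : Type} [LinearOrder ι] (K : ι → Type) [∀ i, LinearOrder (K i)]
    (C : (Σₗ i : ι, K i) → Type) [∀ p, LinearOrder (C p)] :
    (Σₗ i : ι, Σₗ k : K i, C (toLex ⟨i, k⟩)) ≃o (Σₗ p : Σₗ i : ι, K i, C p) := by
  refine StrictMono.orderIsoOfSurjective
    (fun x => toLex ⟨toLex ⟨(ofLex x).1, (ofLex (ofLex x).2).1⟩, (ofLex (ofLex x).2).2⟩) ?_ ?_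
  · intro p q h
    rcases h with @⟨i, j, z, v, h'⟩ | @⟨i, z, v, h'⟩
    · exact Sigma.Lex.left _ _ (Sigma.Lex.left _ _ h')
    · rcases h' with @⟨k, l, x, y, h''⟩ | @⟨k, x, y, h''⟩
      · exact Sigma.Lex.left _ _ (Sigma.Lex.right _ _ h'')
      · exact Sigma.Lex.right _ _ h''
  · rintro ⟨⟨i, k⟩, c⟩
    exact ⟨toLex ⟨i, toLex ⟨k, c⟩⟩, rfl⟩

end CWordAux
namespace CWordAux
open CWord OrderDual

/-- Gluing two finite blocks. -/
noncomputable def boolSigmaFinAdd (C : Bool → Type) [∀ x, LinearOrder (C x)] {m n : ℕ}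
    (e0 : C false ≃o Fin m) (e1 : C true ≃o Fin n) :
    (Σₗ x : Bool, C x) ≃o Fin (m + n) := by
  refine StrictMono.orderIsoOfSurjective
    (fun p => match p with
      | ⟨false, z⟩ => Fin.castAdd n (e0 z)
      | ⟨true, z⟩ => Fin.natAdd m (e1 z)) ?_ ?_
  · intro p q h
    rcases h with @⟨x, y, z, v, h'⟩ | @⟨x, z, v, h'⟩
    · cases x <;> cases y
      · exact absurd h' (by decide)
      · show (Fin.castAdd n (e0 z)) < (Fin.natAdd m (e1 v))
        have := (e0 z).isLt
        simp [Fin.lt_def]; omega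
      · exact absurd h' (by decide)
      · exact absurd h' (by decide)
    · cases x
      · show (Fin.castAdd n (e0 z)) < (Fin.castAdd n (e0 v))
        have := e0.strictMono h'
        simpa [Fin.lt_def] using this
      · show (Fin.natAdd m (e1 z)) < (Fin.natAdd m (e1 v))
        have := e1.strictMono h'
        simpa [Fin.lt_def] using this
  · intro k
    by_cases hk : (k : ℕ) < m
    · refine ⟨toLex ⟨false, e0.symm ⟨k, hk⟩⟩, ?_⟩
      show Fin.castAdd n (e0 (e0.symm ⟨k, hk⟩)) = k
      simp [Fin.ext_iff]
    · refine ⟨toLex ⟨true, e1.symm ⟨k - m, by omega⟩⟩, ?_⟩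
      show Fin.natAdd m (e1 (e1.symm ⟨k - m, by omega⟩)) = k
      simp [Fin.ext_iff]; omega

/-- A subsingleton block followed by an `ω`-block. -/
noncomputable def prependNatIso (C : Bool → Type) [∀ x, LinearOrder (C x)]
    (h0 : Subsingleton (C false)) (h0' : Nonempty (C false)) (e1 : C true ≃o ℕ) :
    (Σₗ x : Bool, C x) ≃o ℕ := by
  refine StrictMono.orderIsoOfSurjective
    (fun p => match p with
      | ⟨false, _⟩ => 0
      | ⟨true, z⟩ => e1 z + 1) ?_ ?_
  · intro p q h
    rcases h with @⟨x, y, z, v, h'⟩ | @⟨x, z, v, h'⟩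
    · cases x <;> cases y
      · exact absurd h' (by decide)
      · show 0 < e1 v + 1; omega
      · exact absurd h' (by decide)
      · exact absurd h' (by decide)
    · cases x
      · exact absurd h' (by have := h0.elim z v; simp [this])
      · show e1 z + 1 < e1 v + 1
        have := e1.strictMono h'; omega
  · intro k
    match k with
    | 0 => exact ⟨toLex ⟨false, h0'.some⟩, rfl⟩
    | k + 1 =>
      refine ⟨toLex ⟨true, e1.symm k⟩, ?_⟩
      show e1 (e1.symm k) + 1 = k + 1
      simp

/-- An `ω*`-block followed by a subsingleton block. -/
noncomputable def appendNatODIso (C : Bool → Type) [∀ x, LinearOrder (C x)]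
    (e0 : C false ≃o ℕᵒᵈ) (h1 : Subsingleton (C true)) (h1' : Nonempty (C true)) :
    (Σₗ x : Bool, C x) ≃o ℕᵒᵈ := by
  refine StrictMono.orderIsoOfSurjective
    (fun p => match p with
      | ⟨false, z⟩ => toDual (ofDual (e0 z) + 1)
      | ⟨true, _⟩ => toDual 0) ?_ ?_
  · intro p q h
    rcases h with @⟨x, y, z, v, h'⟩ | @⟨x, z, v, h'⟩
    · cases x <;> cases y
      · exact absurd h' (by decide)
      · show toDual (ofDual (e0 z) + 1) < toDual 0
        rw [toDual_lt_toDual]; omega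
      · exact absurd h' (by decide)
      · exact absurd h' (by decide)
    · cases x
      · show toDual (ofDual (e0 z) + 1) < toDual (ofDual (e0 v) + 1)
        have h2 : ofDual (e0 v) < ofDual (e0 z) := e0.strictMono h'
        rw [toDual_lt_toDual]
        omega
      · exact absurd h' (by have := h1.elim z v; simp [this])
  · intro k
    match h : ofDual k with
    | 0 =>
      refine ⟨toLex ⟨true, h1'.some⟩, ?_⟩
      show toDual 0 = k
      exact (OrderDual.ofDual.injective (by simp [h])).symm
    | k' + 1 =>
      refine ⟨toLex ⟨false, e0.symm (toDual k')⟩, ?_⟩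
      show toDual (ofDual (e0 (e0.symm (toDual k'))) + 1) = k
      rw [OrderIso.apply_symm_apply]
      exact (OrderDual.ofDual.injective (by simp [h])).symm

/-- `ω` copies of a finite block. -/
noncomputable def natSigmaFinIso (C : Type) [LinearOrder C] {n : ℕ} (e : C ≃o Fin (n + 1)) :
    (Σₗ _ : ℕ, C) ≃o ℕ := by
  refine StrictMono.orderIsoOfSurjective
    (fun p => (ofLex p).1 * (n + 1) + e ((ofLex p).2)) ?_ ?_
  · intro p q h
    rcases h with @⟨i, j, x, y, h'⟩ | @⟨i, x, y, h'⟩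
    · show i * (n + 1) + (e x : ℕ) < j * (n + 1) + (e y : ℕ)
      have hx := (e x).isLt; have hy := (e y).isLt
      have h3 : (i + 1) * (n + 1) = i * (n + 1) + (n + 1) := by ring
      have h4 : (i + 1) * (n + 1) ≤ j * (n + 1) := Nat.mul_le_mul_right _ (by omega)
      omega
    · show i * (n + 1) + (e x : ℕ) < i * (n + 1) + (e y : ℕ)
      have := e.strictMono h'
      simp only [Fin.lt_def] at this
      omega
  · intro k
    refine ⟨toLex ⟨k / (n+1), e.symm ⟨k % (n+1), Nat.mod_lt _ (by omega)⟩⟩, ?_⟩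
    show k / (n+1) * (n + 1) + (e (e.symm ⟨k % (n+1), _⟩) : ℕ) = k
    rw [OrderIso.apply_symm_apply]
    show k / (n+1) * (n + 1) + k % (n+1) = k
    have h5 := Nat.div_add_mod k (n+1)
    have h6 : k / (n+1) * (n + 1) = (n+1) * (k / (n+1)) := by ring
    omega

/-- `ω*` copies of a finite block. -/
noncomputable def natODSigmaFinIso (C : Type) [LinearOrder C] {n : ℕ} (e : C ≃o Fin (n + 1)) :
    (Σₗ _ : ℕᵒᵈ, C) ≃o ℕᵒᵈ := by
  refine StrictMono.orderIsoOfSurjective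
    (fun p => toDual (ofDual (ofLex p).1 * (n + 1) + (n - e ((ofLex p).2)))) ?_ ?_
  · intro p q h
    rcases h with @⟨i, j, x, y, h'⟩ | @⟨i, x, y, h'⟩
    · show toDual (ofDual i * (n + 1) + (n - (e x : ℕ)))
        < toDual (ofDual j * (n + 1) + (n - (e y : ℕ)))
      rw [toDual_lt_toDual]
      have hx := (e x).isLt; have hy := (e y).isLt
      have h2 : (ofDual j) < ofDual i := h'
      have h3 : (ofDual j + 1) * (n + 1) = ofDual j * (n + 1) + (n + 1) := by ring
      have h4 : (ofDual j + 1) * (n + 1) ≤ ofDual i * (n + 1) := Nat.mul_le_mul_right _ (by omega)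
      omega
    · show toDual (ofDual i * (n + 1) + (n - (e x : ℕ)))
        < toDual (ofDual i * (n + 1) + (n - (e y : ℕ)))
      rw [toDual_lt_toDual]
      have hx := (e x).isLt; have hy := (e y).isLt
      have := e.strictMono h'
      simp only [Fin.lt_def] at this
      omega
  · intro k
    refine ⟨toLex ⟨toDual (ofDual k / (n+1)), e.symm ⟨n - ofDual k % (n+1), by omega⟩⟩, ?_⟩
    have h1 : ofDual k % (n+1) < n + 1 := Nat.mod_lt _ (by omega)
    show toDual (ofDual (toDual (ofDual k / (n+1))) * (n + 1)
      + (n - (e (e.symm ⟨n - ofDual k % (n+1), by omega⟩) : ℕ))) = k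
    rw [OrderIso.apply_symm_apply]
    show toDual (ofDual k / (n+1) * (n + 1) + (n - (n - ofDual k % (n+1)))) = k
    have : ofDual k / (n+1) * (n + 1) + (n - (n - ofDual k % (n+1))) = ofDual k := by
      have h5 := Nat.div_add_mod (ofDual k) (n+1)
      have h6 : ofDual k / (n+1) * (n + 1) = (n+1) * (ofDual k / (n+1)) := by ring
      omega
    rw [this]; rfl

noncomputable def boolFin2Iso : Bool ≃o Fin 2 := by
  refine StrictMono.orderIsoOfSurjective (fun b => cond b 1 0) (by decide) (by decide)

end CWordAux
namespace CWordAux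
open CWord

variable {S : Type}

theorem isOProd.isPlusProd {π : CWord S → S} (hp : IsOProd π) : IsPlusProd π :=
  ⟨fun u v _ h => hp.1 u v h, hp.2.1, fun ι _ _ _ u _ => hp.2.2 ι u⟩

theorem piso {π : CWord S → S} (hp : IsPlusProd π) {u v : CWord S}
    (h : Nonempty u.carrier) (hiso : Iso u v) : π u = π v := hp.1 u v h hiso

theorem L_expand {π : CWord S → S} (hp : IsPlusProd π) {ι : Type} [LinearOrder ι] [Countable ι]
    [Nonempty ι] (f : ι → S) (v : ι → CWord S) (hne : ∀ i, Nonempty (v i).carrier)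
    (hv : ∀ i, π (v i) = f i) : π (ofFun f) = π (prod v) := by
  have h : (fun i => π (v i)) = f := funext hv
  rw [← h]
  exact hp.2.2 ι v hne

theorem L_expandO {π : CWord S → S} (hp : IsOProd π) {ι : Type} [LinearOrder ι] [Countable ι]
    (f : ι → S) (v : ι → CWord S) (hv : ∀ i, π (v i) = f i) : π (ofFun f) = π (prod v) := by
  have h : (fun i => π (v i)) = f := funext hv
  rw [← h]
  exact hp.2.2 ι v

theorem single_nonempty (a : S) : Nonempty (single a).carrier := ⟨(0 : Fin 1)⟩

theorem prod_nonempty {ι : Type} [LinearOrder ι] [Countable ι] {v : ι → CWord S} (i : ι)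
    (h : Nonempty (v i).carrier) : Nonempty (prod v).carrier := ⟨toLex ⟨i, h.some⟩⟩

theorem L_one {π : CWord S → S} (hp : IsPlusProd π) (u : CWord S) (h : Nonempty u.carrier) :
    π (prod fun _ : Fin 1 => u) = π u := by
  refine piso hp (prod_nonempty 0 h) ⟨fin1SigmaIso u.carrier, fun x => rfl⟩

theorem L_singles {π : CWord S → S} (hp : IsPlusProd π) {ι : Type} [LinearOrder ι] [Countable ι]
    [Nonempty ι] (f : ι → S) : π (prod fun i => single (f i)) = π (ofFun f) := by
  refine piso hp (prod_nonempty (Classical.arbitrary ι) (single_nonempty _))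
    ⟨sigmaFin1Iso ι, fun x => rfl⟩

theorem L_mulW {π : CWord S → S} {mul : S → S → S} (hp : IsPlusProd π)
    (hmul : ∀ a b : S, mul a b = π (CWord.ofFun (fun x : Bool => cond x b a)))
    (A B : CWord S) (hA : Nonempty A.carrier) (hB : Nonempty B.carrier) :
    mul (π A) (π B) = π (concat A B) := by
  rw [hmul]
  exact L_expand hp _ (fun x : Bool => cond x B A)
    (fun x => by cases x <;> assumption) (fun x => by cases x <;> rfl)

theorem L_flatten {π : CWord S → S} (hp : IsPlusProd π) {ι : Type} [LinearOrder ι] [Countable ι]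
    (K : ι → Type) [∀ i, LinearOrder (K i)] [∀ i, Countable (K i)]
    (v : (Σₗ i : ι, K i) → CWord S) (p0 : Σₗ i : ι, K i)
    (hv : ∀ p, Nonempty (v p).carrier) :
    π (prod fun i : ι => prod fun k : K i => v (toLex ⟨i, k⟩)) = π (prod v) := by
  refine piso hp ⟨toLex ⟨(ofLex p0).1, toLex ⟨(ofLex p0).2, (hv p0).some⟩⟩⟩
    ⟨flattenIso K (fun p => (v p).carrier), fun x => rfl⟩

theorem L_single {π : CWord S → S} (hp : IsPlusProd π) (a : S) : π (single a) = a := hp.2.1 a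

end CWordAux
namespace CWordAux
open CWord

variable {S : Type}

/-- Two-letter word. -/
abbrev twW (a b : S) : CWord S := ofFun (fun x : Bool => cond x b a)

/-- Index type for a `2 + 1` block decomposition. -/
abbrev K3 : Bool → Type := fun t => cond t (Fin 1) Bool

/-- Index type for a `1 + 2` block decomposition. -/
abbrev K3' : Bool → Type := fun t => cond t Bool (Fin 1)

instance instK3LO : ∀ t, LinearOrder (K3 t)
  | false => inferInstanceAs (LinearOrder Bool)
  | true => inferInstanceAs (LinearOrder (Fin 1))

instance instK3Cnt : ∀ t, Countable (K3 t)
  | false => inferInstanceAs (Countable Bool)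
  | true => inferInstanceAs (Countable (Fin 1))

instance instK3LO' : ∀ t, LinearOrder (K3' t)
  | false => inferInstanceAs (LinearOrder (Fin 1))
  | true => inferInstanceAs (LinearOrder Bool)

instance instK3Cnt' : ∀ t, Countable (K3' t)
  | false => inferInstanceAs (Countable (Fin 1))
  | true => inferInstanceAs (Countable Bool)

instance : Nonempty (Σₗ t : Bool, K3 t) := ⟨toLex ⟨false, false⟩⟩
instance : Nonempty (Σₗ t : Bool, K3' t) := ⟨toLex ⟨true, false⟩⟩

/-- Blocks `A B | C`. -/
def blocks3 (A B C : CWord S) : (Σₗ t : Bool, K3 t) → CWord S :=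
  fun p => match p with
  | ⟨false, y⟩ => cond y B A
  | ⟨true, _⟩ => C

/-- Blocks `A | B C`. -/
def blocks3' (A B C : CWord S) : (Σₗ t : Bool, K3' t) → CWord S :=
  fun p => match p with
  | ⟨false, _⟩ => A
  | ⟨true, y⟩ => cond y C B

noncomputable def e3a : (Σₗ t : Bool, K3 t) ≃o Fin 3 :=
  (boolSigmaFinAdd K3 boolFin2Iso (OrderIso.refl (Fin 1))).trans (Fin.castOrderIso rfl)

noncomputable def e3b : (Σₗ t : Bool, K3' t) ≃o Fin 3 :=
  (boolSigmaFinAdd K3' (OrderIso.refl (Fin 1)) boolFin2Iso).trans (Fin.castOrderIso rfl)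

theorem L_blocks3 {π : CWord S → S} {mul : S → S → S} (hp : IsPlusProd π)
    (hmul : ∀ a b : S, mul a b = π (CWord.ofFun (fun x : Bool => cond x b a)))
    (A B C : CWord S) (hA : Nonempty A.carrier) (hB : Nonempty B.carrier)
    (hC : Nonempty C.carrier) :
    mul (mul (π A) (π B)) (π C) = π (prod (blocks3 A B C)) := by
  rw [L_mulW hp hmul A B hA hB, hmul]
  have h2 : π (ofFun fun x : Bool => cond x (π C) (π (concat A B)))
      = π (prod (fun t : Bool => prod (fun k : K3 t => blocks3 A B C (toLex ⟨t, k⟩)))) := by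
    refine L_expand hp _ _ ?_ ?_
    · intro t; cases t
      · exact prod_nonempty false hA
      · exact prod_nonempty (0 : Fin 1) hC
    · intro t; cases t
      · rfl
      · exact L_one hp C hC
  rw [h2]
  exact L_flatten hp K3 (blocks3 A B C) (toLex ⟨true, (0 : Fin 1)⟩)
    (by rintro ⟨t, k⟩; cases t
        · cases k
          · exact hA
          · exact hB
        · exact hC)

theorem L_blocks3' {π : CWord S → S} {mul : S → S → S} (hp : IsPlusProd π)
    (hmul : ∀ a b : S, mul a b = π (CWord.ofFun (fun x : Bool => cond x b a)))
    (A B C : CWord S) (hA : Nonempty A.carrier) (hB : Nonempty B.carrier)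
    (hC : Nonempty C.carrier) :
    mul (π A) (mul (π B) (π C)) = π (prod (blocks3' A B C)) := by
  rw [L_mulW hp hmul B C hB hC, hmul]
  have h2 : π (ofFun fun x : Bool => cond x (π (concat B C)) (π A))
      = π (prod (fun t : Bool => prod (fun k : K3' t => blocks3' A B C (toLex ⟨t, k⟩)))) := by
    refine L_expand hp _ _ ?_ ?_
    · intro t; cases t
      · exact prod_nonempty (0 : Fin 1) hA
      · exact prod_nonempty false hB
    · intro t; cases t
      · exact L_one hp A hA
      · rfl
  rw [h2]
  exact L_flatten hp K3' (blocks3' A B C) (toLex ⟨false, (0 : Fin 1)⟩)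
    (by rintro ⟨t, k⟩; cases t
        · exact hA
        · cases k
          · exact hB
          · exact hC)

/-- Letters for the `(ab)c` decomposition. -/
def f3a (a b c : S) : (Σₗ t : Bool, K3 t) → S :=
  fun p => match p with
  | ⟨false, y⟩ => cond y b a
  | ⟨true, _⟩ => c

/-- Letters for the `a(bc)` decomposition. -/
def f3b (a b c : S) : (Σₗ t : Bool, K3' t) → S :=
  fun p => match p with
  | ⟨false, _⟩ => a
  | ⟨true, y⟩ => cond y c b

/-- Associativity (A1). -/
theorem L_assoc {π : CWord S → S} {mul : S → S → S} (hp : IsPlusProd π)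
    (hmul : ∀ a b : S, mul a b = π (CWord.ofFun (fun x : Bool => cond x b a)))
    (a b c : S) : mul (mul a b) c = mul a (mul b c) := by
  have ha := L_single hp a; have hb := L_single hp b; have hc := L_single hp c
  rw [← ha, ← hb, ← hc,
    L_blocks3 hp hmul _ _ _ (single_nonempty a) (single_nonempty b) (single_nonempty c),
    L_blocks3' hp hmul _ _ _ (single_nonempty a) (single_nonempty b) (single_nonempty c)]
  have h1 : blocks3 (single a) (single b) (single c) = fun p => single (f3a a b c p) := by
    funext p
    rcases p with ⟨t, y⟩
    cases t
    · cases y <;> rfl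
    · rfl
  have h2 : blocks3' (single a) (single b) (single c) = fun p => single (f3b a b c p) := by
    funext p
    rcases p with ⟨t, y⟩
    cases t
    · rfl
    · cases y <;> rfl
  rw [h1, h2, L_singles hp, L_singles hp]
  refine piso hp ⟨toLex ⟨false, false⟩⟩ ⟨e3a.trans e3b.symm, ?_⟩
  rintro ⟨t, y⟩
  cases t
  · cases y
    · have h : (e3a.trans e3b.symm) (⟨false, false⟩ : Σₗ t : Bool, K3 t) = toLex ⟨false, (0 : Fin 1)⟩ := by
        show e3b.symm (e3b (toLex ⟨false, (0 : Fin 1)⟩)) = _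
        exact e3b.symm_apply_apply _
      exact (congrArg (ofFun (f3b a b c)).label h).trans rfl
    · have h : (e3a.trans e3b.symm) (⟨false, true⟩ : Σₗ t : Bool, K3 t) = toLex ⟨true, false⟩ := by
        show e3b.symm (e3b (toLex ⟨true, false⟩)) = _
        exact e3b.symm_apply_apply _
      exact (congrArg (ofFun (f3b a b c)).label h).trans rfl
  · rcases y with ⟨n, hn⟩
    obtain rfl : n = 0 := by omega
    have h : (e3a.trans e3b.symm) (⟨true, ⟨0, hn⟩⟩ : Σₗ t : Bool, K3 t) = toLex ⟨true, true⟩ := by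
      show e3b.symm (e3b (toLex ⟨true, true⟩)) = _
      exact e3b.symm_apply_apply _
    exact (congrArg (ofFun (f3b a b c)).label h).trans rfl

end CWordAux
namespace CWordAux
open CWord OrderDual

variable {S : Type}

/-- Alternating `ω`-word `a b a b …`. -/
def galt (a b : S) : ℕ → S := fun m => if m % 2 = 0 then a else b

/-- Alternating `ω*`-word `… a b a b` (ending in `a`). -/
def galt' (a b : S) : ℕᵒᵈ → S := fun m => if ofDual m % 2 = 0 then a else b

/-- Constant finite word. -/
abbrev aPow (a : S) (n : ℕ) : CWord S := ofFun (fun _ : Fin (n+1) => a)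

theorem L_tau_word {π : CWord S → S} {mul : S → S → S} {tau : S → S} (hp : IsPlusProd π)
    (hmul : ∀ a b : S, mul a b = π (CWord.ofFun (fun x : Bool => cond x b a)))
    (htau : ∀ a : S, tau a = π (CWord.ofFun (fun _ : ℕ => a))) (a b : S) :
    tau (mul a b) = π (ofFun (galt a b)) := by
  rw [htau]
  have h1 : π (ofFun fun _ : ℕ => mul a b) = π (prod fun _ : ℕ => twW a b) :=
    L_expand hp _ _ (fun _ => ⟨false⟩) (fun _ => (hmul a b).symm)
  rw [h1]
  refine piso hp (prod_nonempty 0 ⟨false⟩)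
    ⟨natSigmaFinIso Bool boolFin2Iso, ?_⟩
  rintro ⟨m, y⟩
  cases y
  · show (if (m * (1+1) + 0) % 2 = 0 then a else b) = a
    rw [if_pos (by omega)]
  · show (if (m * (1+1) + 1) % 2 = 0 then a else b) = b
    rw [if_neg (by omega)]

theorem L_tau_word2 {π : CWord S → S} {mul : S → S → S} {tau : S → S} (hp : IsPlusProd π)
    (hmul : ∀ a b : S, mul a b = π (CWord.ofFun (fun x : Bool => cond x b a)))
    (htau : ∀ a : S, tau a = π (CWord.ofFun (fun _ : ℕ => a))) (a b : S) :
    mul a (tau (mul b a)) = π (ofFun (galt a b)) := by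
  rw [htau]
  have h1 : π (ofFun fun _ : ℕ => mul b a) = π (prod fun _ : ℕ => twW b a) :=
    L_expand hp _ _ (fun _ => ⟨false⟩) (fun _ => (hmul b a).symm)
  rw [h1]
  have h2 := L_mulW hp hmul (single a) (prod fun _ : ℕ => twW b a)
    (single_nonempty a) (prod_nonempty 0 ⟨false⟩)
  rw [L_single hp a] at h2
  rw [h2]
  refine piso hp ⟨toLex ⟨false, (0 : Fin 1)⟩⟩
    ⟨prependNatIso _ (inferInstanceAs (Subsingleton (Fin 1))) ⟨(0 : Fin 1)⟩
      (natSigmaFinIso Bool boolFin2Iso), ?_⟩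
  rintro ⟨t, z⟩
  cases t
  · show (if (0 : ℕ) % 2 = 0 then a else b) = a
    rw [if_pos (by omega)]
  · rcases z with ⟨m, y⟩
    cases y
    · show (if (m * (1+1) + 0 + 1) % 2 = 0 then a else b) = b
      rw [if_neg (by omega)]
    · show (if (m * (1+1) + 1 + 1) % 2 = 0 then a else b) = a
      rw [if_pos (by omega)]

theorem L_A2a {π : CWord S → S} {mul : S → S → S} {tau : S → S} (hp : IsPlusProd π)
    (hmul : ∀ a b : S, mul a b = π (CWord.ofFun (fun x : Bool => cond x b a)))
    (htau : ∀ a : S, tau a = π (CWord.ofFun (fun _ : ℕ => a))) (a b : S) :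
    tau (mul a b) = mul a (tau (mul b a)) :=
  (L_tau_word hp hmul htau a b).trans (L_tau_word2 hp hmul htau a b).symm

theorem L_sPow {π : CWord S → S} {mul : S → S → S} (hp : IsPlusProd π)
    (hmul : ∀ a b : S, mul a b = π (CWord.ofFun (fun x : Bool => cond x b a)))
    (a : S) : ∀ n : ℕ, sPow mul a n = π (aPow a n) := by
  intro n
  induction n with
  | zero => exact (L_single hp a).symm
  | succ n ih =>
    show mul a (sPow mul a n) = _
    rw [ih]
    have h := L_mulW hp hmul (single a) (aPow a n) (single_nonempty a) ⟨(0 : Fin (n+1))⟩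
    rw [L_single hp a] at h
    rw [h]
    refine piso hp ⟨toLex ⟨false, (0 : Fin 1)⟩⟩
      ⟨(boolSigmaFinAdd _ (OrderIso.refl (Fin 1)) (OrderIso.refl (Fin (n+1)))).trans
        (Fin.castOrderIso (by omega)), ?_⟩
    rintro ⟨t, z⟩
    cases t <;> rfl

theorem L_A2b {π : CWord S → S} {mul : S → S → S} {tau : S → S} (hp : IsPlusProd π)
    (hmul : ∀ a b : S, mul a b = π (CWord.ofFun (fun x : Bool => cond x b a)))
    (htau : ∀ a : S, tau a = π (CWord.ofFun (fun _ : ℕ => a))) (a : S) (n : ℕ) :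
    tau (sPow mul a n) = tau a := by
  rw [htau, htau]
  have h1 : π (ofFun fun _ : ℕ => sPow mul a n) = π (prod fun _ : ℕ => aPow a n) :=
    L_expand hp _ _ (fun _ => ⟨(0 : Fin (n+1))⟩) (fun _ => (L_sPow hp hmul a n).symm)
  rw [h1]
  refine piso hp (prod_nonempty 0 ⟨(0 : Fin (n+1))⟩)
    ⟨natSigmaFinIso (Fin (n+1)) (OrderIso.refl _), ?_⟩
  exact fun x => rfl

theorem L_ts_word {π : CWord S → S} {mul : S → S → S} {ts : S → S} (hp : IsPlusProd π)
    (hmul : ∀ a b : S, mul a b = π (CWord.ofFun (fun x : Bool => cond x b a)))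
    (hts : ∀ a : S, ts a = π (CWord.ofFun (fun _ : ℕᵒᵈ => a))) (a b : S) :
    ts (mul b a) = π (ofFun (galt' a b)) := by
  rw [hts]
  have h1 : π (ofFun fun _ : ℕᵒᵈ => mul b a) = π (prod fun _ : ℕᵒᵈ => twW b a) :=
    L_expand hp _ _ (fun _ => ⟨false⟩) (fun _ => (hmul b a).symm)
  rw [h1]
  refine piso hp (prod_nonempty (toDual 0) ⟨false⟩)
    ⟨natODSigmaFinIso Bool boolFin2Iso, ?_⟩
  rintro ⟨m, y⟩
  cases y
  · show (if (ofDual m * (1+1) + (1 - 0)) % 2 = 0 then a else b) = b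
    rw [if_neg (by omega)]
  · show (if (ofDual m * (1+1) + (1 - 1)) % 2 = 0 then a else b) = a
    rw [if_pos (by omega)]

theorem L_ts_word2 {π : CWord S → S} {mul : S → S → S} {ts : S → S} (hp : IsPlusProd π)
    (hmul : ∀ a b : S, mul a b = π (CWord.ofFun (fun x : Bool => cond x b a)))
    (hts : ∀ a : S, ts a = π (CWord.ofFun (fun _ : ℕᵒᵈ => a))) (a b : S) :
    mul (ts (mul a b)) a = π (ofFun (galt' a b)) := by
  rw [hts]
  have h1 : π (ofFun fun _ : ℕᵒᵈ => mul a b) = π (prod fun _ : ℕᵒᵈ => twW a b) :=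
    L_expand hp _ _ (fun _ => ⟨false⟩) (fun _ => (hmul a b).symm)
  rw [h1]
  have h2 := L_mulW hp hmul (prod fun _ : ℕᵒᵈ => twW a b) (single a)
    (prod_nonempty (toDual 0) ⟨false⟩) (single_nonempty a)
  rw [L_single hp a] at h2
  rw [h2]
  refine piso hp ⟨toLex ⟨true, (0 : Fin 1)⟩⟩
    ⟨appendNatODIso _ (natODSigmaFinIso Bool boolFin2Iso)
      (inferInstanceAs (Subsingleton (Fin 1))) ⟨(0 : Fin 1)⟩, ?_⟩
  rintro ⟨t, z⟩
  cases t
  · rcases z with ⟨m, y⟩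
    cases y
    · show (if (ofDual m * (1+1) + (1 - 0) + 1) % 2 = 0 then a else b) = a
      rw [if_pos (by omega)]
    · show (if (ofDual m * (1+1) + (1 - 1) + 1) % 2 = 0 then a else b) = b
      rw [if_neg (by omega)]
  · show (if (0 : ℕ) % 2 = 0 then a else b) = a
    rw [if_pos (by omega)]

theorem L_A3a {π : CWord S → S} {mul : S → S → S} {ts : S → S} (hp : IsPlusProd π)
    (hmul : ∀ a b : S, mul a b = π (CWord.ofFun (fun x : Bool => cond x b a)))
    (hts : ∀ a : S, ts a = π (CWord.ofFun (fun _ : ℕᵒᵈ => a))) (a b : S) :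
    ts (mul b a) = mul (ts (mul a b)) a :=
  (L_ts_word hp hmul hts a b).trans (L_ts_word2 hp hmul hts a b).symm

theorem L_A3b {π : CWord S → S} {mul : S → S → S} {ts : S → S} (hp : IsPlusProd π)
    (hmul : ∀ a b : S, mul a b = π (CWord.ofFun (fun x : Bool => cond x b a)))
    (hts : ∀ a : S, ts a = π (CWord.ofFun (fun _ : ℕᵒᵈ => a))) (a : S) (n : ℕ) :
    ts (sPow mul a n) = ts a := by
  rw [hts, hts]
  have h1 : π (ofFun fun _ : ℕᵒᵈ => sPow mul a n) = π (prod fun _ : ℕᵒᵈ => aPow a n) :=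
    L_expand hp _ _ (fun _ => ⟨(0 : Fin (n+1))⟩) (fun _ => (L_sPow hp hmul a n).symm)
  rw [h1]
  refine piso hp (prod_nonempty (toDual 0) ⟨(0 : Fin (n+1))⟩)
    ⟨natODSigmaFinIso (Fin (n+1)) (OrderIso.refl _), ?_⟩
  exact fun x => rfl

end CWordAux
namespace CWordAux
open CWord

variable {S : Type} {P : Set S}

theorem eta_above {w : CWord S} (h : IsEtaWord P w) {a : S} (ha : a ∈ P) (x : w.carrier) :
    ∃ z, x < z ∧ w.label z = a := by
  obtain ⟨y, hy⟩ := h.2.2.2.1.exists_gt x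
  obtain ⟨z, hz1, _, hz3⟩ := h.2.2.2.2.2 a ha x y hy
  exact ⟨z, hz1, hz3⟩

theorem eta_below {w : CWord S} (h : IsEtaWord P w) {a : S} (ha : a ∈ P) (x : w.carrier) :
    ∃ z, z < x ∧ w.label z = a := by
  obtain ⟨y, hy⟩ := h.2.2.1.exists_lt x
  obtain ⟨z, _, hz2, hz3⟩ := h.2.2.2.2.2 a ha y x hy
  exact ⟨z, hz2, hz3⟩

theorem eta_some_label {w : CWord S} (h : IsEtaWord P w) {a : S} (ha : a ∈ P) :
    ∃ z, w.label z = a := by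
  obtain ⟨z, _, hz⟩ := eta_above h ha h.1.some
  exact ⟨z, hz⟩

/-- Main gluing lemma: a lexicographic sum of blocks, each of which is an η-word
over `P` or a subsingleton labelled in `P`, with η-blocks suitably dense,
is an η-word over `P`. -/
theorem master {ι : Type} [LinearOrder ι] [Countable ι]
    [Nonempty ι] (v : ι → CWord S)
    (hblk : ∀ i, Nonempty (v i).carrier ∧ (∀ x, (v i).label x ∈ P) ∧
      (IsEtaWord P (v i) ∨ ∀ x y : (v i).carrier, ¬ x < y))
    (hM3 : ∀ i j, i < j →
      (∃ k, i < k ∧ k < j ∧ IsEtaWord P (v k)) ∨ IsEtaWord P (v i) ∨ IsEtaWord P (v j))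
    (hM4 : ∀ i, (∃ j, i < j) ∨ IsEtaWord P (v i))
    (hM5 : ∀ i, (∃ j, j < i) ∨ IsEtaWord P (v i)) :
    IsEtaWord P (prod v) := by
  refine ⟨⟨toLex ⟨Classical.arbitrary ι, (hblk _).1.some⟩⟩, ⟨?_⟩, ⟨?_⟩, ⟨?_⟩, ?_, ?_⟩
  · -- densely ordered
    intro p q h
    rcases h with @⟨i, j, x, y, hij⟩ | @⟨i, x, y, hxy⟩
    · rcases hM3 i j hij with ⟨k, hik, hkj, hk⟩ | hGi | hGj
      · exact ⟨toLex ⟨k, hk.1.some⟩, Sigma.Lex.left _ _ hik, Sigma.Lex.left _ _ hkj⟩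
      · obtain ⟨x', hx'⟩ := hGi.2.2.2.1.exists_gt x
        exact ⟨toLex ⟨i, x'⟩, Sigma.Lex.right _ _ hx', Sigma.Lex.left _ _ hij⟩
      · obtain ⟨y', hy'⟩ := hGj.2.2.1.exists_lt y
        exact ⟨toLex ⟨j, y'⟩, Sigma.Lex.left _ _ hij, Sigma.Lex.right _ _ hy'⟩
    · rcases (hblk i).2.2 with hGi | hnl
      · obtain ⟨z, h1, h2⟩ := hGi.2.1.dense x y hxy
        exact ⟨toLex ⟨i, z⟩, Sigma.Lex.right _ _ h1, Sigma.Lex.right _ _ h2⟩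
      · exact absurd hxy (hnl x y)
  · -- no min
    rintro ⟨i, x⟩
    rcases hM5 i with ⟨j, hj⟩ | hGi
    · exact ⟨toLex ⟨j, (hblk j).1.some⟩, Sigma.Lex.left _ _ hj⟩
    · obtain ⟨y, hy⟩ := hGi.2.2.1.exists_lt x
      exact ⟨toLex ⟨i, y⟩, Sigma.Lex.right _ _ hy⟩
  · -- no max
    rintro ⟨i, x⟩
    rcases hM4 i with ⟨j, hj⟩ | hGi
    · exact ⟨toLex ⟨j, (hblk j).1.some⟩, Sigma.Lex.left _ _ hj⟩
    · obtain ⟨y, hy⟩ := hGi.2.2.2.1.exists_gt x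
      exact ⟨toLex ⟨i, y⟩, Sigma.Lex.right _ _ hy⟩
  · -- labels
    rintro ⟨i, x⟩
    exact (hblk i).2.1 x
  · -- density of every label
    intro a ha p q h
    rcases h with @⟨i, j, x, y, hij⟩ | @⟨i, x, y, hxy⟩
    · rcases hM3 i j hij with ⟨k, hik, hkj, hk⟩ | hGi | hGj
      · obtain ⟨z, hz⟩ := eta_some_label hk ha
        exact ⟨toLex ⟨k, z⟩, Sigma.Lex.left _ _ hik, Sigma.Lex.left _ _ hkj, hz⟩
      · obtain ⟨z, hz1, hz2⟩ := eta_above hGi ha x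
        exact ⟨toLex ⟨i, z⟩, Sigma.Lex.right _ _ hz1, Sigma.Lex.left _ _ hij, hz2⟩
      · obtain ⟨z, hz1, hz2⟩ := eta_below hGj ha y
        exact ⟨toLex ⟨j, z⟩, Sigma.Lex.left _ _ hij, Sigma.Lex.right _ _ hz1, hz2⟩
    · rcases (hblk i).2.2 with hGi | hnl
      · obtain ⟨z, h1, h2, h3⟩ := hGi.2.2.2.2.2 a ha x y hxy
        exact ⟨toLex ⟨i, z⟩, Sigma.Lex.right _ _ h1, Sigma.Lex.right _ _ h2, h3⟩
      · exact absurd hxy (hnl x y)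

/-- Variant with possibly empty blocks (used for the ◦-monoid case). -/
theorem master2 {ι : Type} [LinearOrder ι] [Countable ι] (v : ι → CWord S) (Q : ι → Prop)
    (hQ : ∀ i, Q i → Nonempty (v i).carrier ∧ (∀ x y : (v i).carrier, ¬ x < y) ∧
      ∀ x, (v i).label x ∈ P)
    (hnQ : ∀ i, ¬ Q i → IsEmpty (v i).carrier)
    (hne : ∃ i, Q i)
    (hbet : ∀ i j, i < j → Q i → Q j → ∃ k, i < k ∧ k < j ∧ Q k)
    (habove : ∀ i, Q i → ∃ j, i < j ∧ Q j)
    (hbelow : ∀ i, Q i → ∃ j, j < i ∧ Q j)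
    (hlab : ∀ a ∈ P, ∀ i j, i < j → Q i → Q j →
      ∃ k, i < k ∧ k < j ∧ ∃ x : (v k).carrier, (v k).label x = a) :
    IsEtaWord P (prod v) := by
  have hQ' : ∀ i, (v i).carrier → Q i := by
    intro i x
    by_contra h
    exact (hnQ i h).false x
  refine ⟨⟨toLex ⟨hne.choose, (hQ _ hne.choose_spec).1.some⟩⟩, ⟨?_⟩, ⟨?_⟩, ⟨?_⟩, ?_, ?_⟩
  · intro p q h
    rcases h with @⟨i, j, x, y, hij⟩ | @⟨i, x, y, hxy⟩
    · obtain ⟨k, hik, hkj, hk⟩ := hbet i j hij (hQ' i x) (hQ' j y)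
      exact ⟨toLex ⟨k, (hQ k hk).1.some⟩, Sigma.Lex.left _ _ hik, Sigma.Lex.left _ _ hkj⟩
    · exact absurd hxy ((hQ i (hQ' i x)).2.1 x y)
  · rintro ⟨i, x⟩
    obtain ⟨j, hj, hQj⟩ := hbelow i (hQ' i x)
    exact ⟨toLex ⟨j, (hQ j hQj).1.some⟩, Sigma.Lex.left _ _ hj⟩
  · rintro ⟨i, x⟩
    obtain ⟨j, hj, hQj⟩ := habove i (hQ' i x)
    exact ⟨toLex ⟨j, (hQ j hQj).1.some⟩, Sigma.Lex.left _ _ hj⟩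
  · rintro ⟨i, x⟩
    exact (hQ i (hQ' i x)).2.2 x
  · intro a ha p q h
    rcases h with @⟨i, j, x, y, hij⟩ | @⟨i, x, y, hxy⟩
    · obtain ⟨k, hik, hkj, z, hz⟩ := hlab a ha i j hij (hQ' i x) (hQ' j y)
      exact ⟨toLex ⟨k, z⟩, Sigma.Lex.left _ _ hik, Sigma.Lex.left _ _ hkj, hz⟩
    · exact absurd hxy ((hQ i (hQ' i x)).2.1 x y)

end CWordAux
namespace CWordAux
open CWord

variable {S : Type} {P : Set S}

theorem list_max_mem {γ : Type} [LinearOrder γ] :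
    ∀ (l : List γ), l ≠ [] → ∃ m ∈ l, ∀ z ∈ l, z ≤ m
  | [], h => absurd rfl h
  | [a], _ => ⟨a, List.mem_singleton_self a, by simp⟩
  | a :: b :: t, _ => by
    obtain ⟨m, hm, hall⟩ := list_max_mem (b :: t) (by simp)
    rcases le_total a m with h | h
    · refine ⟨m, List.mem_cons_of_mem _ hm, ?_⟩
      intro z hz
      rcases List.mem_cons.mp hz with rfl | hz
      · exact h
      · exact hall z hz
    · refine ⟨a, List.mem_cons_self, ?_⟩
      intro z hz
      rcases List.mem_cons.mp hz with rfl | hz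
      · exact le_rfl
      · exact (hall z hz).trans h

theorem list_min_mem {γ : Type} [LinearOrder γ] :
    ∀ (l : List γ), l ≠ [] → ∃ m ∈ l, ∀ z ∈ l, m ≤ z
  | [], h => absurd rfl h
  | [a], _ => ⟨a, List.mem_singleton_self a, by simp⟩
  | a :: b :: t, _ => by
    obtain ⟨m, hm, hall⟩ := list_min_mem (b :: t) (by simp)
    rcases le_total m a with h | h
    · refine ⟨m, List.mem_cons_of_mem _ hm, ?_⟩
      intro z hz
      rcases List.mem_cons.mp hz with rfl | hz
      · exact h
      · exact hall z hz
    · refine ⟨a, List.mem_cons_self, ?_⟩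
      intro z hz
      rcases List.mem_cons.mp hz with rfl | hz
      · exact le_rfl
      · exact h.trans (hall z hz)

/-- In an η-word one can realise any finite cut with any prescribed label. -/
theorem find_between {v : CWord S} (hv : IsEtaWord P v) {a : S} (ha : a ∈ P)
    (L R : List v.carrier) (hsep : ∀ z ∈ L, ∀ z' ∈ R, z < z') :
    ∃ y, v.label y = a ∧ (∀ z ∈ L, z < y) ∧ (∀ z' ∈ R, y < z') := by
  by_cases hL : L = []
  · by_cases hR : R = []
    · obtain ⟨y, hy⟩ := eta_some_label hv ha
      exact ⟨y, hy, by simp [hL], by simp [hR]⟩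
    · obtain ⟨m, hm, hmin⟩ := list_min_mem R hR
      obtain ⟨y, hy1, hy2⟩ := eta_below hv ha m
      exact ⟨y, hy2, by simp [hL], fun z' hz' => lt_of_lt_of_le hy1 (hmin z' hz')⟩
  · by_cases hR : R = []
    · obtain ⟨m, hm, hmax⟩ := list_max_mem L hL
      obtain ⟨y, hy1, hy2⟩ := eta_above hv ha m
      exact ⟨y, hy2, fun z hz => lt_of_le_of_lt (hmax z hz) hy1, by simp [hR]⟩
    · obtain ⟨mL, hmL, hmaxL⟩ := list_max_mem L hL
      obtain ⟨mR, hmR, hminR⟩ := list_min_mem R hR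
      obtain ⟨y, hy1, hy2, hy3⟩ := hv.2.2.2.2.2 a ha mL mR (hsep mL hmL mR hmR)
      exact ⟨y, hy3, fun z hz => lt_of_le_of_lt (hmaxL z hz) hy1,
        fun z' hz' => lt_of_lt_of_le hy2 (hminR z' hz')⟩

/-- A finite label- and order-compatible partial matching. -/
def Compat (u v : CWord S) (l : List (u.carrier × v.carrier)) : Prop :=
  (∀ p ∈ l, v.label p.2 = u.label p.1) ∧
  ∀ p ∈ l, ∀ q ∈ l, (p.1 < q.1 ↔ p.2 < q.2)

theorem compat_nil (u v : CWord S) : Compat u v [] :=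
  ⟨fun p hp => absurd hp (List.not_mem_nil (a := p)), fun p hp => absurd hp (List.not_mem_nil (a := p))⟩

theorem compat_swap {u v : CWord S} {l : List (u.carrier × v.carrier)} (h : Compat u v l) :
    Compat v u (l.map Prod.swap) := by
  constructor
  · intro p hp
    obtain ⟨q, hq, rfl⟩ := List.mem_map.mp hp
    exact (h.1 q hq).symm
  · intro p hp q hq
    obtain ⟨p', hp', rfl⟩ := List.mem_map.mp hp
    obtain ⟨q', hq', rfl⟩ := List.mem_map.mp hq
    exact (h.2 p' hp' q' hq').symm

theorem compat_cons_swap {u v : CWord S} {l : List (u.carrier × v.carrier)}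
    {x : u.carrier} {y : v.carrier}
    (h : Compat v u ((y, x) :: l.map Prod.swap)) : Compat u v ((x, y) :: l) := by
  have h2 := compat_swap h
  have h3 : ((y, x) :: l.map Prod.swap).map Prod.swap = (x, y) :: l := by
    simp [List.map_map, Prod.swap_swap_eq]
  rwa [h3] at h2

/-- Extension of a compatible matching by a new point on the left. -/
theorem compat_extend {u v : CWord S} (hu : IsEtaWord P u) (hv : IsEtaWord P v)
    {l : List (u.carrier × v.carrier)} (hl : Compat u v l) (x : u.carrier) :
    ∃ y, Compat u v ((x, y) :: l) := by
  by_cases hx : ∃ p ∈ l, p.1 = x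
  · obtain ⟨p, hp, hpx⟩ := hx
    refine ⟨p.2, ?_, ?_⟩
    · intro q hq
      rcases List.mem_cons.mp hq with rfl | hq
      · rw [← hpx]; exact hl.1 p hp
      · exact hl.1 q hq
    · intro q hq r hr
      rcases List.mem_cons.mp hq with rfl | hq <;> rcases List.mem_cons.mp hr with rfl | hr
      · simp
      · show x < r.1 ↔ p.2 < r.2
        rw [← hpx]; exact hl.2 p hp r hr
      · show q.1 < x ↔ q.2 < p.2
        rw [← hpx]; exact hl.2 q hq p hp
      · exact hl.2 q hq r hr
  · set L := (l.filter (fun p => decide (p.1 < x))).map Prod.snd with hLdef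
    set R := (l.filter (fun p => decide (x < p.1))).map Prod.snd with hRdef
    have hmemL : ∀ z ∈ L, ∃ p ∈ l, p.1 < x ∧ p.2 = z := by
      intro z hz
      obtain ⟨p, hp, rfl⟩ := List.mem_map.mp hz
      have := List.mem_filter.mp hp
      exact ⟨p, this.1, of_decide_eq_true this.2, rfl⟩
    have hmemR : ∀ z ∈ R, ∃ p ∈ l, x < p.1 ∧ p.2 = z := by
      intro z hz
      obtain ⟨p, hp, rfl⟩ := List.mem_map.mp hz
      have := List.mem_filter.mp hp
      exact ⟨p, this.1, of_decide_eq_true this.2, rfl⟩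
    have hLin : ∀ p ∈ l, p.1 < x → p.2 ∈ L := by
      intro p hp h
      exact List.mem_map.mpr ⟨p, List.mem_filter.mpr ⟨hp, decide_eq_true h⟩, rfl⟩
    have hRin : ∀ p ∈ l, x < p.1 → p.2 ∈ R := by
      intro p hp h
      exact List.mem_map.mpr ⟨p, List.mem_filter.mpr ⟨hp, decide_eq_true h⟩, rfl⟩
    have hsep : ∀ z ∈ L, ∀ z' ∈ R, z < z' := by
      intro z hz z' hz'
      obtain ⟨p, hp, hpx, rfl⟩ := hmemL z hz
      obtain ⟨q, hq, hqx, rfl⟩ := hmemR z' hz'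
      exact (hl.2 p hp q hq).mp (hpx.trans hqx)
    obtain ⟨y, hy1, hy2, hy3⟩ := find_between hv (hu.2.2.2.2.1 x) L R hsep
    refine ⟨y, ?_, ?_⟩
    · intro q hq
      rcases List.mem_cons.mp hq with rfl | hq
      · exact hy1
      · exact hl.1 q hq
    · intro q hq r hr
      rcases List.mem_cons.mp hq with rfl | hq <;> rcases List.mem_cons.mp hr with rfl | hr
      · simp
      · show x < r.1 ↔ y < r.2
        constructor
        · intro h; exact hy3 r.2 (hRin r hr h)
        · intro h
          rcases lt_trichotomy r.1 x with h' | h' | h'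
          · exact absurd h (lt_asymm (hy2 r.2 (hLin r hr h')))
          · exact absurd ⟨r, hr, h'⟩ hx
          · exact h'
      · show q.1 < x ↔ q.2 < y
        constructor
        · intro h; exact hy2 q.2 (hLin q hq h)
        · intro h
          rcases lt_trichotomy q.1 x with h' | h' | h'
          · exact h'
          · exact absurd ⟨q, hq, h'⟩ hx
          · exact absurd h (lt_asymm (hy3 q.2 (hRin q hq h')))
      · exact hl.2 q hq r hr

end CWordAux
namespace CWordAux
open CWord

variable {S : Type} {P : Set S}

/-- The back-and-forth chain of compatible matchings. -/
noncomputable def bf {u v : CWord S} (hu : IsEtaWord P u) (hv : IsEtaWord P v)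
    (su : ℕ → u.carrier) (sv : ℕ → v.carrier) :
    ℕ → {l : List (u.carrier × v.carrier) // Compat u v l}
  | 0 => ⟨[], compat_nil u v⟩
  | n + 1 =>
    let l1 := bf hu hv su sv n
    let h2 := (compat_extend hu hv l1.2 (su n)).choose_spec
    let l2 : {l : List (u.carrier × v.carrier) // Compat u v l} := ⟨_, h2⟩
    let h3 := (compat_extend hv hu (compat_swap l2.2) (sv n)).choose_spec
    ⟨((compat_extend hv hu (compat_swap l2.2) (sv n)).choose, sv n) :: l2.1,
      compat_cons_swap h3⟩

theorem bf_succ_sub {u v : CWord S} (hu : IsEtaWord P u) (hv : IsEtaWord P v)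
    (su : ℕ → u.carrier) (sv : ℕ → v.carrier) (n : ℕ) (p : u.carrier × v.carrier)
    (hp : p ∈ (bf hu hv su sv n).1) : p ∈ (bf hu hv su sv (n+1)).1 := by
  rw [bf]
  exact List.mem_cons_of_mem _ (List.mem_cons_of_mem _ hp)

theorem bf_mono {u v : CWord S} (hu : IsEtaWord P u) (hv : IsEtaWord P v)
    (su : ℕ → u.carrier) (sv : ℕ → v.carrier) {n m : ℕ} (h : n ≤ m)
    (p : u.carrier × v.carrier)
    (hp : p ∈ (bf hu hv su sv n).1) : p ∈ (bf hu hv su sv m).1 := by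
  induction m with
  | zero => obtain rfl : n = 0 := by omega
            exact hp
  | succ m ih =>
    rcases Nat.lt_or_ge n (m+1) with h' | h'
    · exact bf_succ_sub hu hv su sv m p (ih (by omega))
    · obtain rfl : n = m + 1 := by omega
      exact hp

theorem bf_fst {u v : CWord S} (hu : IsEtaWord P u) (hv : IsEtaWord P v)
    (su : ℕ → u.carrier) (sv : ℕ → v.carrier) (n : ℕ) :
    ∃ y, (su n, y) ∈ (bf hu hv su sv (n+1)).1 := by
  rw [bf]
  exact ⟨_, List.mem_cons_of_mem _ (List.mem_cons_self)⟩

theorem bf_snd {u v : CWord S} (hu : IsEtaWord P u) (hv : IsEtaWord P v)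
    (su : ℕ → u.carrier) (sv : ℕ → v.carrier) (n : ℕ) :
    ∃ x, (x, sv n) ∈ (bf hu hv su sv (n+1)).1 := by
  rw [bf]
  exact ⟨_, List.mem_cons_self⟩

/-- Any two η-words over the same set of labels are isomorphic. -/
theorem eta_iso {u v : CWord S} (hu : IsEtaWord P u) (hv : IsEtaWord P v) : Iso u v := by
  haveI := hu.1
  haveI := hv.1
  obtain ⟨su, hsu⟩ := exists_surjective_nat u.carrier
  obtain ⟨sv, hsv⟩ := exists_surjective_nat v.carrier
  set R : u.carrier → v.carrier → Prop :=
    fun x y => ∃ n, (x, y) ∈ (bf hu hv su sv n).1 with hR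
  have hcompat : ∀ {x y x' y'}, R x y → R x' y' →
      ((x < x' ↔ y < y') ∧ v.label y = u.label x) := by
    rintro x y x' y' ⟨n, hn⟩ ⟨m, hm⟩
    have h1 := bf_mono hu hv su sv (Nat.le_max_left n m) _ hn
    have h2 := bf_mono hu hv su sv (Nat.le_max_right n m) _ hm
    exact ⟨(bf hu hv su sv (max n m)).2.2 _ h1 _ h2,
      (bf hu hv su sv (max n m)).2.1 _ h1⟩
  have hfun : ∀ {x y y'}, R x y → R x y' → y = y' := by
    intro x y y' h1 h2
    have a1 := (hcompat h1 h2).1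
    have a2 := (hcompat h2 h1).1
    simp only [lt_self_iff_false, false_iff] at a1 a2
    exact le_antisymm (not_lt.mp a2) (not_lt.mp a1)
  have htotal : ∀ x, ∃ y, R x y := by
    intro x
    obtain ⟨n, rfl⟩ := hsu x
    obtain ⟨y, hy⟩ := bf_fst hu hv su sv n
    exact ⟨y, n + 1, hy⟩
  set f : u.carrier → v.carrier := fun x => (htotal x).choose with hf
  have hfR : ∀ x, R x (f x) := fun x => (htotal x).choose_spec
  have hmono : StrictMono f := by
    intro x x' h
    exact ((hcompat (hfR x) (hfR x')).1).mp h
  have hsurj : Function.Surjective f := by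
    intro y
    obtain ⟨n, rfl⟩ := hsv y
    obtain ⟨x, hx⟩ := bf_snd hu hv su sv n
    exact ⟨x, hfun (hfR x) ⟨n + 1, hx⟩⟩
  exact ⟨StrictMono.orderIsoOfSurjective f hmono hsurj,
    fun x => (hcompat (hfR x) (hfR x)).2⟩

end CWordAux
namespace CWordAux
open CWord OrderDual

variable {S : Type}

theorem fin1_no_lt : ∀ x y : Fin 1, ¬ x < y := by
  intro x y h
  have := x.2; have := y.2
  exact absurd (Fin.lt_def.mp h) (by omega)

theorem single_no_lt (a : S) : ∀ x y : (single a).carrier, ¬ x < y := fin1_no_lt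

/-- Data of a block decomposition. -/
structure Blk (S : Type) : Type 1 where
  K : Type
  [lo : LinearOrder K]
  [cnt : Countable K]
  g : K → CWord S

attribute [instance] Blk.lo Blk.cnt

theorem L_A4 {π : CWord S → S} {mul : S → S → S} {tau taustar : S → S} {kappa : Set S → S}
    (hp : IsPlusProd π)
    (hmul : ∀ a b : S, mul a b = π (CWord.ofFun (fun x : Bool => cond x b a)))
    (htau : ∀ a : S, tau a = π (CWord.ofFun (fun _ : ℕ => a)))
    (hts : ∀ a : S, taustar a = π (CWord.ofFun (fun _ : ℕᵒᵈ => a)))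
    (hκ : ∀ P : Set S, P.Nonempty → ∃ w : CWord S, CWord.IsEtaWord P w ∧ kappa P = π w) :
    ∀ P : Set S, P.Nonempty → ∀ c ∈ P, ∀ P' ⊆ P, ∀ P'' : Set S, P''.Nonempty →
    P'' ⊆ {x | x = kappa P ∨ (∃ a ∈ P, x = mul a (kappa P)) ∨
                (∃ b ∈ P, x = mul (kappa P) b) ∨
                (∃ a ∈ P, ∃ b ∈ P, x = mul (mul a (kappa P)) b)} →
      kappa P = mul (kappa P) (kappa P) ∧
      kappa P = mul (kappa P) (mul c (kappa P)) ∧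
      kappa P = tau (kappa P) ∧
      kappa P = tau (mul (kappa P) c) ∧
      kappa P = taustar (kappa P) ∧
      kappa P = taustar (mul c (kappa P)) ∧
      kappa P = kappa (P' ∪ P'') := by
  intro P hP c hc P' hP' P'' hP'' hsub
  obtain ⟨w, hw, hkw⟩ := hκ P hP
  have hwne : Nonempty w.carrier := hw.1
  have key : ∀ W : CWord S, IsEtaWord P W → π W = π w :=
    fun W hW => piso hp hW.1 (eta_iso hW hw)
  refine ⟨?_, ?_, ?_, ?_, ?_, ?_, ?_⟩
  · -- κP = κP · κP
    rw [hkw, L_mulW hp hmul w w hwne hwne]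
    refine (key _ (master (fun t : Bool => cond t w w) ?_ ?_ ?_ ?_)).symm
    · intro i; cases i <;> exact ⟨hw.1, hw.2.2.2.2.1, Or.inl hw⟩
    · intro i j _; right; left; cases i <;> exact hw
    · intro i; right; cases i <;> exact hw
    · intro i; right; cases i <;> exact hw
  · -- κP = κP · (c · κP)
    rw [hkw]
    have h3 := L_blocks3' hp hmul w (single c) w hwne (single_nonempty c) hwne
    rw [L_single hp c] at h3
    rw [h3]
    refine (key _ (master (blocks3' w (single c) w) ?_ ?_ ?_ ?_)).symm
    · rintro ⟨t, y⟩
      cases t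
      · exact ⟨hw.1, hw.2.2.2.2.1, Or.inl hw⟩
      · cases y
        · exact ⟨single_nonempty c, fun _ => hc, Or.inr (single_no_lt c)⟩
        · exact ⟨hw.1, hw.2.2.2.2.1, Or.inl hw⟩
    · rintro ⟨t, y⟩ ⟨t', y'⟩ hij
      rcases hij with @⟨_, _, _, _, h'⟩ | @⟨_, _, _, h'⟩
      · cases t
        · right; left; exact hw
        · cases t' <;> exact absurd h' (by decide)
      · cases t
        · exact absurd h' (fin1_no_lt _ _)
        · obtain ⟨rfl, rfl⟩ := Bool.lt_iff.mp h'
          right; right; exact hw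
    · rintro ⟨t, y⟩
      cases t
      · exact Or.inl ⟨toLex ⟨true, true⟩, Sigma.Lex.left _ _ (by decide)⟩
      · cases y
        · exact Or.inl ⟨toLex ⟨true, true⟩, Sigma.Lex.right _ _ (by decide)⟩
        · right; exact hw
    · rintro ⟨t, y⟩
      cases t
      · right; exact hw
      · exact Or.inl ⟨toLex ⟨false, (0 : Fin 1)⟩, Sigma.Lex.left _ _ (by decide)⟩
  · -- κP = (κP)^τ
    rw [hkw, htau]
    have h2 : π (ofFun fun _ : ℕ => π w) = π (prod fun _ : ℕ => w) :=
      L_expand hp _ _ (fun _ => hwne) (fun _ => rfl)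
    rw [h2]
    exact (key _ (master (fun _ : ℕ => w)
      (fun i => ⟨hw.1, hw.2.2.2.2.1, Or.inl hw⟩)
      (fun i j _ => Or.inr (Or.inl hw))
      (fun i => Or.inr hw) (fun i => Or.inr hw))).symm
  · -- κP = (κP · c)^τ
    rw [hkw]
    have hmw := L_mulW hp hmul w (single c) hwne (single_nonempty c)
    rw [L_single hp c] at hmw
    rw [hmw, htau]
    have h2 : π (ofFun fun _ : ℕ => π (concat w (single c)))
        = π (prod fun _ : ℕ => concat w (single c)) :=
      L_expand hp _ _ (fun _ => ⟨toLex ⟨false, hwne.some⟩⟩) (fun _ => rfl)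
    rw [h2]
    have h3 := L_flatten hp (fun _ : ℕ => Bool)
      (fun p : Σₗ _ : ℕ, Bool => cond (ofLex p).2 (single c) w) (toLex ⟨0, false⟩)
      (by rintro ⟨n, y⟩; cases y
          · exact hwne
          · exact single_nonempty c)
    haveI : Nonempty (Σₗ _ : ℕ, Bool) := ⟨toLex ⟨0, false⟩⟩
    refine (Eq.trans h3 ?_).symm.trans ?_
    · refine key _ (master _ ?_ ?_ ?_ ?_)
      · rintro ⟨n, y⟩
        cases y
        · exact ⟨hw.1, hw.2.2.2.2.1, Or.inl hw⟩
        · exact ⟨single_nonempty c, fun _ => hc, Or.inr (single_no_lt c)⟩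
      · rintro ⟨n, y⟩ ⟨m, y'⟩ hij
        rcases hij with @⟨_, _, _, _, h'⟩ | @⟨_, _, _, h'⟩
        · cases y'
          · right; right; exact hw
          · exact Or.inl ⟨toLex ⟨m, false⟩, Sigma.Lex.left _ _ h', Sigma.Lex.right _ _ (show (false : Bool) < true by decide), hw⟩
        · obtain ⟨rfl, rfl⟩ := Bool.lt_iff.mp h'
          right; left; exact hw
      · rintro ⟨n, y⟩
        exact Or.inl ⟨toLex ⟨n + 1, false⟩, Sigma.Lex.left _ _ (by omega)⟩
      · rintro ⟨n, y⟩
        cases y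
        · right; exact hw
        · exact Or.inl ⟨toLex ⟨n, false⟩, Sigma.Lex.right _ _ (show (false : Bool) < true by decide)⟩
    · rfl
  · -- κP = (κP)^τ*
    rw [hkw, hts]
    have h2 : π (ofFun fun _ : ℕᵒᵈ => π w) = π (prod fun _ : ℕᵒᵈ => w) :=
      L_expand hp _ _ (fun _ => hwne) (fun _ => rfl)
    rw [h2]
    exact (key _ (master (fun _ : ℕᵒᵈ => w)
      (fun i => ⟨hw.1, hw.2.2.2.2.1, Or.inl hw⟩)
      (fun i j _ => Or.inr (Or.inl hw))
      (fun i => Or.inr hw) (fun i => Or.inr hw))).symm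
  · -- κP = (c · κP)^τ*
    rw [hkw]
    have hmw := L_mulW hp hmul (single c) w (single_nonempty c) hwne
    rw [L_single hp c] at hmw
    rw [hmw, hts]
    have h2 : π (ofFun fun _ : ℕᵒᵈ => π (concat (single c) w))
        = π (prod fun _ : ℕᵒᵈ => concat (single c) w) :=
      L_expand hp _ _ (fun _ => ⟨toLex ⟨true, hwne.some⟩⟩) (fun _ => rfl)
    rw [h2]
    have h3 := L_flatten hp (fun _ : ℕᵒᵈ => Bool)
      (fun p : Σₗ _ : ℕᵒᵈ, Bool => cond (ofLex p).2 w (single c)) (toLex ⟨toDual 0, false⟩)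
      (by rintro ⟨n, y⟩; cases y
          · exact single_nonempty c
          · exact hwne)
    haveI : Nonempty (Σₗ _ : ℕᵒᵈ, Bool) := ⟨toLex ⟨toDual 0, false⟩⟩
    refine (Eq.trans h3 ?_).symm.trans ?_
    · refine key _ (master _ ?_ ?_ ?_ ?_)
      · rintro ⟨n, y⟩
        cases y
        · exact ⟨single_nonempty c, fun _ => hc, Or.inr (single_no_lt c)⟩
        · exact ⟨hw.1, hw.2.2.2.2.1, Or.inl hw⟩
      · rintro ⟨n, y⟩ ⟨m, y'⟩ hij
        rcases hij with @⟨_, _, _, _, h'⟩ | @⟨_, _, _, h'⟩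
        · cases y
          · exact Or.inl ⟨toLex ⟨n, true⟩, Sigma.Lex.right _ _ (show (false : Bool) < true by decide), Sigma.Lex.left _ _ h', hw⟩
          · right; left; exact hw
        · obtain ⟨rfl, rfl⟩ := Bool.lt_iff.mp h'
          right; right; exact hw
      · rintro ⟨n, y⟩
        cases y
        · exact Or.inl ⟨toLex ⟨n, true⟩, Sigma.Lex.right _ _ (show (false : Bool) < true by decide)⟩
        · right; exact hw
      · rintro ⟨n, y⟩
        refine Or.inl ⟨toLex ⟨toDual (ofDual n + 1), false⟩, Sigma.Lex.left _ _ ?_⟩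
        show toDual (ofDual n + 1) < toDual (ofDual n)
        rw [toDual_lt_toDual]
        omega
    · rfl
  · -- κP = κ(P' ∪ P'')
    obtain ⟨w'', hw'', hkw''⟩ := hκ (P' ∪ P'') ⟨hP''.some, Or.inr hP''.some_mem⟩
    rw [hkw, hkw'']
    have hch : ∀ x : w''.carrier, ∃ B : Blk S,
        Nonempty B.K ∧ (∀ k, Nonempty (B.g k).carrier) ∧ π (prod B.g) = w''.label x ∧
        (∀ k, B.g k = w ∨ ∃ t ∈ P, B.g k = single t) ∧
        (∀ k k' : B.K, k < k' →
          (∃ k'', k < k'' ∧ k'' < k' ∧ B.g k'' = w) ∨ B.g k = w ∨ B.g k' = w) ∧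
        (w''.label x ∈ P'' → ∃ k, B.g k = w) := by
      intro x
      have hx : w''.label x ∈ P' ∪ P'' := hw''.2.2.2.2.1 x
      by_cases hx2 : w''.label x ∈ P''
      · rcases hsub hx2 with h | ⟨aa, haa, h⟩ | ⟨bb, hbb, h⟩ | ⟨aa, haa, bb, hbb, h⟩
        · refine ⟨⟨Fin 1, fun _ => w⟩, ⟨0⟩, fun _ => hwne, ?_, fun _ => Or.inl rfl,
            fun k k' hkk => absurd hkk (fin1_no_lt _ _), fun _ => ⟨0, rfl⟩⟩
          rw [h, hkw]
          exact L_one hp w hwne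
        · refine ⟨⟨Bool, fun y => cond y w (single aa)⟩, ⟨false⟩,
            (by rintro (_|_)
                · exact single_nonempty aa
                · exact hwne), ?_,
            (by rintro (_|_)
                · exact Or.inr ⟨aa, haa, rfl⟩
                · exact Or.inl rfl), ?_, fun _ => ⟨true, rfl⟩⟩
          · have h4 := L_mulW hp hmul (single aa) w (single_nonempty aa) hwne
            rw [L_single hp aa] at h4
            rw [h, hkw]
            exact h4.symm
          · intro k k' hkk
            obtain ⟨rfl, rfl⟩ := Bool.lt_iff.mp hkk
            exact Or.inr (Or.inr rfl)
        · refine ⟨⟨Bool, fun y => cond y (single bb) w⟩, ⟨false⟩,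
            (by rintro (_|_)
                · exact hwne
                · exact single_nonempty bb), ?_,
            (by rintro (_|_)
                · exact Or.inl rfl
                · exact Or.inr ⟨bb, hbb, rfl⟩), ?_, fun _ => ⟨false, rfl⟩⟩
          · have h4 := L_mulW hp hmul w (single bb) hwne (single_nonempty bb)
            rw [L_single hp bb] at h4
            rw [h, hkw]
            exact h4.symm
          · intro k k' hkk
            obtain ⟨rfl, rfl⟩ := Bool.lt_iff.mp hkk
            exact Or.inr (Or.inl rfl)
        · refine ⟨⟨Σₗ t : Bool, K3' t, blocks3' (single aa) w (single bb)⟩,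
            ⟨toLex ⟨false, (0 : Fin 1)⟩⟩,
            (by rintro ⟨t, y⟩
                cases t
                · exact single_nonempty aa
                · cases y
                  · exact hwne
                  · exact single_nonempty bb), ?_,
            (by rintro ⟨t, y⟩
                cases t
                · exact Or.inr ⟨aa, haa, rfl⟩
                · cases y
                  · exact Or.inl rfl
                  · exact Or.inr ⟨bb, hbb, rfl⟩), ?_, fun _ => ⟨toLex ⟨true, false⟩, rfl⟩⟩
          · have h4 := L_blocks3' hp hmul (single aa) w (single bb)
              (single_nonempty aa) hwne (single_nonempty bb)
            rw [L_single hp aa, L_single hp bb] at h4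
            rw [h, hkw, L_assoc hp hmul]
            exact h4.symm
          · rintro ⟨t, y⟩ ⟨t', y'⟩ hkk
            rcases hkk with @⟨_, _, _, _, h'⟩ | @⟨_, _, _, h'⟩
            · cases t
              · cases t'
                · exact absurd h' (by decide)
                · cases y'
                  · exact Or.inr (Or.inr rfl)
                  · exact Or.inl ⟨toLex ⟨true, false⟩, Sigma.Lex.left _ _ (by decide),
                      Sigma.Lex.right _ _ (by decide), rfl⟩
              · cases t' <;> exact absurd h' (by decide)
            · cases t
              · exact absurd h' (fin1_no_lt _ _)
              · obtain ⟨rfl, rfl⟩ := Bool.lt_iff.mp h'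
                exact Or.inr (Or.inl rfl)
      · have hx3 : w''.label x ∈ P := hP' (hx.resolve_right hx2)
        refine ⟨⟨Fin 1, fun _ => single (w''.label x)⟩, ⟨0⟩, fun _ => single_nonempty _, ?_,
          fun _ => Or.inr ⟨_, hx3, rfl⟩,
          fun k k' hkk => absurd hkk (fin1_no_lt _ _), fun h => absurd h hx2⟩
        have := L_one hp (single (w''.label x)) (single_nonempty _)
        rw [L_single hp (w''.label x)] at this
        exact this
    choose B hB1 hB2 hB3 hB4 hB5 hB6 using hch
    haveI : Nonempty w''.carrier := hw''.1
    have step2 : π (ofFun w''.label) = π (prod fun x => prod (B x).g) :=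
      L_expand hp _ _ (fun x => prod_nonempty (hB1 x).some (hB2 x _)) hB3
    have step3 := L_flatten hp (fun x => (B x).K)
      (fun p : Σₗ x : w''.carrier, (B x).K => (B (ofLex p).1).g (ofLex p).2)
      (toLex ⟨hw''.1.some, (hB1 _).some⟩)
      (by rintro ⟨x, k⟩; exact hB2 x k)
    haveI : Nonempty (Σₗ x : w''.carrier, (B x).K) := ⟨toLex ⟨hw''.1.some, (hB1 _).some⟩⟩
    have hη : IsEtaWord P (prod (fun p : Σₗ x : w''.carrier, (B x).K =>
        (B (ofLex p).1).g (ofLex p).2)) := by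
      refine master _ ?_ ?_ ?_ ?_
      · rintro ⟨x, k⟩
        show Nonempty ((B x).g k).carrier ∧ (∀ y, ((B x).g k).label y ∈ P) ∧
          (IsEtaWord P ((B x).g k) ∨ ∀ y z : ((B x).g k).carrier, ¬ y < z)
        rcases hB4 x k with hgw | ⟨t, ht, hgs⟩
        · rw [hgw]
          exact ⟨hw.1, hw.2.2.2.2.1, Or.inl hw⟩
        · rw [hgs]
          exact ⟨single_nonempty t, fun _ => ht, Or.inr (single_no_lt t)⟩
      · intro pq1 pq2 hij
        rcases hij with @⟨x, x', k, k', h'⟩ | @⟨x, k, k', h'⟩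
        · obtain ⟨x'', h1, h2, h3⟩ := hw''.2.2.2.2.2 _ (Or.inr hP''.some_mem) x x' h'
          obtain ⟨k'', hk''⟩ := hB6 x'' (by rw [h3]; exact hP''.some_mem)
          refine Or.inl ⟨toLex ⟨x'', k''⟩, Sigma.Lex.left _ _ h1, Sigma.Lex.left _ _ h2, ?_⟩
          show IsEtaWord P ((B x'').g k'')
          rw [hk'']; exact hw
        · rcases hB5 x k k' h' with ⟨k'', h1, h2, hk''⟩ | hgw | hgw
          · refine Or.inl ⟨toLex ⟨x, k''⟩, Sigma.Lex.right _ _ h1, Sigma.Lex.right _ _ h2, ?_⟩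
            show IsEtaWord P ((B x).g k'')
            rw [hk'']; exact hw
          · refine Or.inr (Or.inl ?_)
            show IsEtaWord P ((B x).g k)
            rw [hgw]; exact hw
          · refine Or.inr (Or.inr ?_)
            show IsEtaWord P ((B x).g k')
            rw [hgw]; exact hw
      · rintro ⟨x, k⟩
        obtain ⟨x', hx'⟩ := hw''.2.2.2.1.exists_gt x
        exact Or.inl ⟨toLex ⟨x', (hB1 x').some⟩, Sigma.Lex.left _ _ hx'⟩
      · rintro ⟨x, k⟩
        obtain ⟨x', hx'⟩ := hw''.2.2.1.exists_lt x
        exact Or.inl ⟨toLex ⟨x', (hB1 x').some⟩, Sigma.Lex.left _ _ hx'⟩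
    have step1 : π w'' = π (ofFun w''.label) := rfl
    exact (step1.trans (step2.trans (step3.trans (key _ hη)))).symm

end CWordAux
namespace CWordAux
open CWord

variable {S : Type}

noncomputable def sigmaSecondEmptyIso (C : Bool → Type) [∀ t, LinearOrder (C t)]
    (h1 : IsEmpty (C true)) : (Σₗ t : Bool, C t) ≃o C false := by
  refine StrictMono.orderIsoOfSurjective
    (fun p => match p with
      | ⟨false, z⟩ => z
      | ⟨true, z⟩ => h1.elim z) ?_ ?_
  · intro p q h
    rcases h with @⟨t, t', z, v, h'⟩ | @⟨t, z, v, h'⟩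
    · cases t
      · cases t'
        · exact absurd h' (by decide)
        · exact h1.elim v
      · exact h1.elim z
    · cases t
      · exact h'
      · exact h1.elim z
  · intro z; exact ⟨toLex ⟨false, z⟩, rfl⟩

noncomputable def sigmaFirstEmptyIso (C : Bool → Type) [∀ t, LinearOrder (C t)]
    (h0 : IsEmpty (C false)) : (Σₗ t : Bool, C t) ≃o C true := by
  refine StrictMono.orderIsoOfSurjective
    (fun p => match p with
      | ⟨false, z⟩ => h0.elim z
      | ⟨true, z⟩ => z) ?_ ?_
  · intro p q h
    rcases h with @⟨t, t', z, v, h'⟩ | @⟨t, z, v, h'⟩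
    · cases t
      · exact h0.elim z
      · cases t' <;> first | exact h0.elim v | exact absurd h' (by decide)
    · cases t
      · exact h0.elim z
      · exact h'
  · intro z; exact ⟨toLex ⟨true, z⟩, rfl⟩

theorem L_eps_iso {π : CWord S → S} (ho : IsOProd π) {U : CWord S} (h : IsEmpty U.carrier) :
    π U = π epsilon := by
  haveI : IsEmpty (epsilon (A := S)).carrier := ⟨fun z => Fin.elim0 z⟩
  refine ho.1 U epsilon ⟨⟨Equiv.equivOfIsEmpty U.carrier epsilon.carrier, ?_⟩, fun x => h.elim x⟩
  intro a b
  exact h.elim a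

theorem L_mul_one {π : CWord S → S} {mul : S → S → S} {one : S} (ho : IsOProd π)
    (hmul : ∀ a b : S, mul a b = π (CWord.ofFun (fun x : Bool => cond x b a)))
    (hone : one = π CWord.epsilon) (x : S) : mul x one = x := by
  rw [hmul, hone]
  have h1 : π (ofFun fun t : Bool => cond t (π epsilon) x)
      = π (prod fun t : Bool => cond t epsilon (single x)) := by
    refine L_expandO ho _ _ ?_
    intro t; cases t
    · exact ho.2.1 x
    · rfl
  rw [h1]
  have h2 : π (prod fun t : Bool => cond t epsilon (single x)) = π (single x) := by
    refine ho.1 _ _ ⟨sigmaSecondEmptyIso _ ⟨fun z => Fin.elim0 z⟩, ?_⟩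
    rintro ⟨t, z⟩
    cases t
    · rfl
    · exact Fin.elim0 z
  rw [h2]
  exact ho.2.1 x

theorem L_one_mul {π : CWord S → S} {mul : S → S → S} {one : S} (ho : IsOProd π)
    (hmul : ∀ a b : S, mul a b = π (CWord.ofFun (fun x : Bool => cond x b a)))
    (hone : one = π CWord.epsilon) (x : S) : mul one x = x := by
  rw [hmul, hone]
  have h1 : π (ofFun fun t : Bool => cond t x (π epsilon))
      = π (prod fun t : Bool => cond t (single x) epsilon) := by
    refine L_expandO ho _ _ ?_
    intro t; cases t
    · rfl
    · exact ho.2.1 x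
  rw [h1]
  have h2 : π (prod fun t : Bool => cond t (single x) epsilon) = π (single x) := by
    refine ho.1 _ _ ⟨sigmaFirstEmptyIso _ ⟨fun z => Fin.elim0 z⟩, ?_⟩
    rintro ⟨t, z⟩
    cases t
    · exact Fin.elim0 z
    · rfl
  rw [h2]
  exact ho.2.1 x

theorem L_tau_one {π : CWord S → S} {tau : S → S} {one : S} (ho : IsOProd π)
    (htau : ∀ a : S, tau a = π (CWord.ofFun (fun _ : ℕ => a)))
    (hone : one = π CWord.epsilon) : tau one = one := by
  rw [htau, hone]
  have h1 : π (ofFun fun _ : ℕ => π (epsilon (A := S))) = π (prod fun _ : ℕ => epsilon (A := S)) :=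
    L_expandO ho _ _ (fun _ => rfl)
  rw [h1]
  exact L_eps_iso ho ⟨by rintro ⟨n, z⟩; exact Fin.elim0 z⟩

theorem L_ts_one {π : CWord S → S} {ts : S → S} {one : S} (ho : IsOProd π)
    (hts : ∀ a : S, ts a = π (CWord.ofFun (fun _ : ℕᵒᵈ => a)))
    (hone : one = π CWord.epsilon) : ts one = one := by
  rw [hts, hone]
  have h1 : π (ofFun fun _ : ℕᵒᵈ => π (epsilon (A := S)))
      = π (prod fun _ : ℕᵒᵈ => epsilon (A := S)) :=
    L_expandO ho _ _ (fun _ => rfl)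
  rw [h1]
  exact L_eps_iso ho ⟨by rintro ⟨n, z⟩; exact Fin.elim0 z⟩

theorem L_kappa_one {π : CWord S → S} {kappa : Set S → S} {one : S} (ho : IsOProd π)
    (hκ : ∀ P : Set S, P.Nonempty → ∃ w : CWord S, CWord.IsEtaWord P w ∧ kappa P = π w)
    (hone : one = π CWord.epsilon) : kappa {one} = one := by
  obtain ⟨w1, hw1, hk1⟩ := hκ {one} ⟨one, rfl⟩
  rw [hk1, hone]
  have h1 : π (ofFun w1.label) = π (prod fun _ : w1.carrier => epsilon (A := S)) := by
    refine L_expandO ho _ _ ?_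
    intro z
    have : w1.label z = one := hw1.2.2.2.2.1 z
    rw [this, hone]
  have h2 : π w1 = π (ofFun w1.label) := rfl
  rw [h2, h1]
  exact L_eps_iso ho ⟨by rintro ⟨x, z⟩; exact Fin.elim0 z⟩

theorem L_kappa_union_one {π : CWord S → S} {kappa : Set S → S} {one : S} (ho : IsOProd π)
    (hκ : ∀ P : Set S, P.Nonempty → ∃ w : CWord S, CWord.IsEtaWord P w ∧ kappa P = π w)
    (hone : one = π CWord.epsilon) (P : Set S) (hP : P.Nonempty) :
    kappa (P ∪ {one}) = kappa P := by
  classical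
  obtain ⟨w, hw, hkw⟩ := hκ P hP
  obtain ⟨w', hw', hkw'⟩ := hκ (P ∪ {one}) ⟨hP.some, Or.inl hP.some_mem⟩
  rw [hkw, hkw']
  set v : w'.carrier → CWord S :=
    fun z => if w'.label z ∈ P then single (w'.label z) else epsilon with hv
  have h1 : π (ofFun w'.label) = π (prod v) := by
    refine L_expandO ho _ _ ?_
    intro z
    by_cases hz : w'.label z ∈ P
    · rw [show v z = single (w'.label z) from if_pos hz]
      exact ho.2.1 _
    · rw [show v z = epsilon from if_neg hz]
      have : w'.label z = one := ((hw'.2.2.2.2.1 z).resolve_left hz)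
      rw [this, hone]
  have h2 : π w' = π (ofFun w'.label) := rfl
  rw [h2, h1]
  have hη : IsEtaWord P (prod v) := by
    refine master2 v (fun z => w'.label z ∈ P) ?_ ?_ ?_ ?_ ?_ ?_ ?_
    · intro i hQi
      rw [show v i = single (w'.label i) from if_pos hQi]
      exact ⟨single_nonempty _, single_no_lt _, fun _ => hQi⟩
    · intro i hQi
      rw [show v i = epsilon from if_neg hQi]
      exact ⟨fun z => Fin.elim0 z⟩
    · obtain ⟨z, hz⟩ := eta_some_label hw' (Or.inl hP.some_mem)
      exact ⟨z, by show w'.label _ ∈ P; rw [hz]; exact hP.some_mem⟩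
    · intro i j hij _ _
      obtain ⟨k, h1', h2', h3'⟩ := hw'.2.2.2.2.2 _ (Or.inl hP.some_mem) i j hij
      exact ⟨k, h1', h2', by show w'.label _ ∈ P; rw [h3']; exact hP.some_mem⟩
    · intro i _
      obtain ⟨j, hj, hlab⟩ := eta_above hw' (Or.inl hP.some_mem) i
      exact ⟨j, hj, by show w'.label _ ∈ P; rw [hlab]; exact hP.some_mem⟩
    · intro i _
      obtain ⟨j, hj, hlab⟩ := eta_below hw' (Or.inl hP.some_mem) i
      exact ⟨j, hj, by show w'.label _ ∈ P; rw [hlab]; exact hP.some_mem⟩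
    · intro a ha i j hij _ _
      obtain ⟨k, h1', h2', h3'⟩ := hw'.2.2.2.2.2 a (Or.inl ha) i j hij
      have hQk : w'.label k ∈ P := by rw [h3']; exact ha
      refine ⟨k, h1', h2', ?_⟩
      rw [show v k = single (w'.label k) from if_pos hQk]
      exact ⟨(0 : Fin 1), h3'⟩
  exact piso (isOProd.isPlusProd ho) hη.1 (eta_iso hη hw)

end CWordAux
/-- if `(S, π)` is a ⊕-semigroup, then `S` equipped with the
operators induced by `π` satisfies axioms (A1)–(A4), i.e. is a ⊕-algebra;
similarly, if `(S, π)` is a ◦-monoid, then `S` equipped with the induced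
operators together with `1 = π(ε)` satisfies axioms (A1)–(A5), i.e. is a
◦-algebra. -/
theorem induced_operators_satisfy_axioms {S : Type} (π : CWord S → S)
    (mul : S → S → S) (tau taustar : S → S) (kappa : Set S → S) (one : S) :
    (CWord.IsPlusProd π → InducedByProd π mul tau taustar kappa →
      PlusAlgAxioms mul tau taustar kappa) ∧
    (CWord.IsOProd π → InducedByProd π mul tau taustar kappa →
      one = π CWord.epsilon → OAlgAxioms one mul tau taustar kappa) := by
  constructor
  · intro hp hi
    obtain ⟨hmul, htau, hts, hκ⟩ := hi
    exact ⟨CWordAux.L_assoc hp hmul, CWordAux.L_A2a hp hmul htau,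
      fun a n => CWordAux.L_A2b hp hmul htau a n,
      CWordAux.L_A3a hp hmul hts, fun a n => CWordAux.L_A3b hp hmul hts a n,
      CWordAux.L_A4 hp hmul htau hts hκ⟩
  · intro ho hi hone
    obtain ⟨hmul, htau, hts, hκ⟩ := hi
    have hp := CWordAux.isOProd.isPlusProd ho
    exact ⟨⟨CWordAux.L_assoc hp hmul, CWordAux.L_A2a hp hmul htau,
      fun a n => CWordAux.L_A2b hp hmul htau a n,
      CWordAux.L_A3a hp hmul hts, fun a n => CWordAux.L_A3b hp hmul hts a n,
      CWordAux.L_A4 hp hmul htau hts hκ⟩,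
      CWordAux.L_mul_one ho hmul hone, CWordAux.L_one_mul ho hmul hone,
      CWordAux.L_tau_one ho htau hone, CWordAux.L_ts_one ho hts hone,
      CWordAux.L_kappa_one ho hκ hone, CWordAux.L_kappa_union_one ho hκ hone⟩
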